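/- For every n ≥ 1, the independence number of the n-th strong power of the symplectic graph Sp(2m,𝔽₂) equals (2m+1)^n. -/

import Mathlib

open Finset

/-- The canonical symplectic form `σ(u,v) = uᵀ [[0, Iₘ], [-Iₘ, 0]] v` on `𝔽₂^{2m}`,
with vectors written as pairs in `(𝔽₂^m) × (𝔽₂^m)`. -/
def sympForm (m : ℕ) (u v : (Fin m → ZMod 2) × (Fin m → ZMod 2)) : ZMod 2 :=
  (∑ i, u.1 i * v.2 i) - ∑ i, u.2 i * v.1 i

/-- The symplectic graph `Sp(2m, 𝔽₂)`: vertices are the nonzero vectors of `𝔽₂^{2m}`,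
with distinct vertices adjacent iff the symplectic form vanishes on them. -/
def sympGraph (m : ℕ) :
    SimpleGraph {v : (Fin m → ZMod 2) × (Fin m → ZMod 2) // v ≠ 0} where
  Adj u v := u ≠ v ∧ sympForm m u.1 v.1 = 0
  symm := by
    constructor
    rintro u v ⟨h, hs⟩
    refine ⟨h.symm, ?_⟩
    have h1 : ∀ f g : Fin m → ZMod 2, ∑ i, f i * g i = ∑ i, g i * f i :=
      fun f g => Finset.sum_congr rfl fun i _ => mul_comm _ _
    unfold sympForm at hs ⊢
    rw [h1 v.1.1 u.1.2, h1 v.1.2 u.1.1]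
    linear_combination -hs
  loopless := ⟨fun u h => h.1 rfl⟩

/-- The independence number of a finite simple graph. -/
noncomputable def SimpleGraph.indepNum' {V : Type*} [Fintype V] (G : SimpleGraph V) : ℕ :=
  sSup {n | ∃ s : Finset V, ((s : Set V).Pairwise fun u v => ¬ G.Adj u v) ∧ s.card = n}

/-- The `n`-fold strong power of a simple graph. -/
def SimpleGraph.strongPow {V : Type*} (G : SimpleGraph V) (n : ℕ) :
    SimpleGraph (Fin n → V) where
  Adj x y := x ≠ y ∧ ∀ i, x i = y i ∨ G.Adj (x i) (y i)
  symm := ⟨fun _ _ ⟨h, ha⟩ => ⟨h.symm, fun i => (ha i).imp Eq.symm SimpleGraph.Adj.symm⟩⟩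
  loopless := ⟨fun _ h => h.1 rfl⟩

/-! ### Auxiliary material -/


lemma zmod2_eq_one {a : ZMod 2} (h : a ≠ 0) : a = 1 := by revert a; decide

lemma zmod2_sub (a b : ZMod 2) : a - b = a + b := by revert a b; decide

lemma sympForm_self (m : ℕ) (u : (Fin m → ZMod 2) × (Fin m → ZMod 2)) :
    sympForm m u u = 0 := by
  unfold sympForm
  rw [sub_eq_zero]
  exact Finset.sum_congr rfl fun i _ => mul_comm _ _

lemma sympForm_comm (m : ℕ) (u v : (Fin m → ZMod 2) × (Fin m → ZMod 2)) :
    sympForm m u v = sympForm m v u := by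
  have h2 : ∀ a b : ZMod 2, a - b = b - a := by decide
  unfold sympForm
  rw [h2]
  congr 1 <;> exact Finset.sum_congr rfl fun i _ => mul_comm _ _

/-! ### The lower-bound construction: `2m+1` pairwise non-orthogonal nonzero vectors -/

def lv (m : ℕ) (k : Fin (2 * m + 1)) : (Fin m → ZMod 2) × (Fin m → ZMod 2) :=
  (fun i => if 2 * (i : ℕ) + 1 ≤ (k : ℕ) then 1 else 0,
   fun i => if ((k : ℕ) / 2 = (i : ℕ) ∧ (k : ℕ) < 2 * m) then 1 else 0)

lemma lv_ne_zero {m : ℕ} (hm : 1 ≤ m) (k : Fin (2 * m + 1)) : lv m k ≠ 0 := by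
  intro h
  rcases Nat.eq_zero_or_pos (k : ℕ) with hk | hk
  · have h0 := congrFun (congrArg Prod.snd h) ⟨0, hm⟩
    simp only [lv] at h0
    rw [if_pos (by constructor <;> omega)] at h0
    exact one_ne_zero h0
  · have h0 := congrFun (congrArg Prod.fst h) ⟨0, hm⟩
    simp only [lv] at h0
    rw [if_pos (by omega)] at h0
    exact one_ne_zero h0

lemma sympForm_lv_lt {m : ℕ} (k l : Fin (2 * m + 1)) (h : (k : ℕ) < (l : ℕ)) :
    sympForm m (lv m k) (lv m l) = 1 := by
  have hl : (l : ℕ) < 2 * m + 1 := l.2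
  have hsum1 : (∑ i, (lv m k).1 i * (lv m l).2 i) = 0 := by
    apply Finset.sum_eq_zero
    intro i _
    simp only [lv]
    split_ifs with h1 h2
    · exfalso; omega
    · exact mul_zero _
    · exact zero_mul _
    · exact zero_mul _
  have hkm : (k : ℕ) / 2 < m := by omega
  have hsum2 : (∑ i, (lv m k).2 i * (lv m l).1 i) = 1 := by
    rw [Finset.sum_eq_single (⟨(k : ℕ) / 2, hkm⟩ : Fin m)]
    · simp only [lv]
      rw [if_pos ⟨trivial, by omega⟩, if_pos (by omega)]
      exact one_mul 1
    · intro i _ hi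
      simp only [lv]
      rw [if_neg]
      · exact zero_mul _
      · rintro ⟨h1, -⟩
        exact hi (by apply Fin.ext; simp [← h1])
    · intro hmem; exact absurd (Finset.mem_univ _) hmem
  unfold sympForm
  rw [hsum1, hsum2]
  decide

lemma sympForm_lv {m : ℕ} (k l : Fin (2 * m + 1)) (h : k ≠ l) :
    sympForm m (lv m k) (lv m l) = 1 := by
  rcases lt_or_gt_of_ne (fun hv : (k : ℕ) = (l : ℕ) => h (Fin.ext hv)) with hlt | hgt
  · exact sympForm_lv_lt k l hlt
  · rw [sympForm_comm]; exact sympForm_lv_lt l k hgt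

lemma lv_injective {m : ℕ} : Function.Injective (lv m) := by
  intro k l hkl
  by_contra hne
  have h1 := sympForm_lv k l hne
  rw [hkl, sympForm_self] at h1
  exact absurd h1 (by decide)

/-! ### Upper bound machinery -/

abbrev Amix (m : ℕ) := Option (Fin m ⊕ Fin m)

def bfun (m : ℕ) : Amix m → ((Fin m → ZMod 2) × (Fin m → ZMod 2)) → ZMod 2
  | none => fun _ => 1
  | some (.inl j) => fun v => v.1 j
  | some (.inr j) => fun v => v.2 j

def cfun (m : ℕ) (u : (Fin m → ZMod 2) × (Fin m → ZMod 2)) : Amix m → ZMod 2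
  | none => 1
  | some (.inl j) => u.2 j
  | some (.inr j) => u.1 j

lemma expand_form (m : ℕ) (u v : (Fin m → ZMod 2) × (Fin m → ZMod 2)) :
    1 + sympForm m u v = ∑ a, cfun m u a * bfun m a v := by
  rw [Fintype.sum_option, Fintype.sum_sum_type]
  simp only [cfun, bfun]
  unfold sympForm
  rw [zmod2_sub]
  have h1 : (∑ j, u.2 j * v.1 j) = ∑ a₁ : Fin m, u.2 a₁ * v.1 a₁ := rfl
  ring

variable {m n : ℕ}

def fprod (m n : ℕ) (x y : Fin n → (Fin m → ZMod 2) × (Fin m → ZMod 2)) : ZMod 2 :=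
  ∏ i, (1 + sympForm m (x i) (y i))

def dcoef (m n : ℕ) (x : Fin n → (Fin m → ZMod 2) × (Fin m → ZMod 2))
    (α : Fin n → Amix m) : ZMod 2 :=
  ∏ i, cfun m (x i) (α i)

def Phi (m n : ℕ) (d : (Fin n → Amix m) → ZMod 2)
    (y : Fin n → (Fin m → ZMod 2) × (Fin m → ZMod 2)) : ZMod 2 :=
  ∑ α : Fin n → Amix m, d α * ∏ i, bfun m (α i) (y i)

lemma fprod_eq_Phi (x : Fin n → (Fin m → ZMod 2) × (Fin m → ZMod 2)) :
    fprod m n x = Phi m n (dcoef m n x) := by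
  funext y
  unfold fprod Phi dcoef
  have h1 : ∀ i, (1 + sympForm m (x i) (y i)) = ∑ a ∈ univ, cfun m (x i) a * bfun m a (y i) :=
    fun i => expand_form m (x i) (y i)
  calc ∏ i, (1 + sympForm m (x i) (y i))
      = ∏ i, ∑ a ∈ univ, cfun m (x i) a * bfun m a (y i) :=
        Finset.prod_congr rfl fun i _ => h1 i
    _ = ∑ α ∈ Fintype.piFinset (fun _ => univ),
          ∏ i, cfun m (x i) (α i) * bfun m (α i) (y i) :=
        Finset.prod_univ_sum _ _
    _ = ∑ α : Fin n → Amix m, (∏ i, cfun m (x i) (α i)) * ∏ i, bfun m (α i) (y i) := by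
        rw [Fintype.piFinset_univ]
        exact Finset.sum_congr rfl fun α _ => Finset.prod_mul_distrib

lemma Phi_sum {ι : Type*} (T : Finset ι)
    (d : ι → (Fin n → Amix m) → ZMod 2) :
    Phi m n (∑ z ∈ T, d z) = ∑ z ∈ T, Phi m n (d z) := by
  funext y
  unfold Phi
  simp only [Finset.sum_apply, Finset.sum_mul]
  exact Finset.sum_comm

/-! vertex embedding -/

abbrev Vtx (m : ℕ) := {v : (Fin m → ZMod 2) × (Fin m → ZMod 2) // v ≠ 0}

def emb (m n : ℕ) (z : Fin n → Vtx m) : Fin n → (Fin m → ZMod 2) × (Fin m → ZMod 2) :=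
  fun i => (z i).1

lemma fprod_self (z : Fin n → Vtx m) : fprod m n (emb m n z) (emb m n z) = 1 := by
  unfold fprod
  apply Finset.prod_eq_one
  intro i _
  rw [sympForm_self]
  decide

lemma fprod_ne {S : Finset (Fin n → Vtx m)}
    (hS : (S : Set (Fin n → Vtx m)).Pairwise fun u v => ¬ ((sympGraph m).strongPow n).Adj u v)
    {z x : Fin n → Vtx m} (hz : z ∈ S) (hx : x ∈ S) (hne : z ≠ x) :
    fprod m n (emb m n z) (emb m n x) = 0 := by
  have hnadj := hS hz hx hne
  have : ¬ ∀ i, z i = x i ∨ (sympGraph m).Adj (z i) (x i) := by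
    intro hall
    exact hnadj ⟨hne, hall⟩
  push_neg at this
  obtain ⟨i, hne_i, hnadj_i⟩ := this
  have hσ : sympForm m (z i).1 (x i).1 ≠ 0 := by
    intro h0
    exact hnadj_i ⟨hne_i, h0⟩
  have hσ1 := zmod2_eq_one hσ
  unfold fprod
  apply Finset.prod_eq_zero (Finset.mem_univ i)
  rw [emb, emb, hσ1]
  decide

lemma sum_fprod_eval {S T : Finset (Fin n → Vtx m)}
    (hS : (S : Set (Fin n → Vtx m)).Pairwise fun u v => ¬ ((sympGraph m).strongPow n).Adj u v)
    (hT : T ⊆ S) (x : Fin n → Vtx m) (hx : x ∈ S) :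
    (∑ z ∈ T, fprod m n (emb m n z) (emb m n x)) = if x ∈ T then 1 else 0 := by
  by_cases hxT : x ∈ T
  · rw [if_pos hxT, Finset.sum_eq_single x]
    · exact fprod_self x
    · intro z hz hzx
      exact fprod_ne hS (hT hz) hx hzx
    · intro h; exact absurd hxT h
  · rw [if_neg hxT]
    apply Finset.sum_eq_zero
    intro z hz
    exact fprod_ne hS (hT hz) hx (fun h => hxT (h ▸ hz))

lemma card_amix (m : ℕ) : Fintype.card (Amix m) = 2 * m + 1 := by
  simp [Amix]
  omega

/-! ### The upper bound -/

lemma indep_card_le (m n : ℕ) (S : Finset (Fin n → Vtx m))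
    (hS : (S : Set (Fin n → Vtx m)).Pairwise fun u v => ¬ ((sympGraph m).strongPow n).Adj u v) :
    S.card ≤ (2 * m + 1) ^ n := by
  classical
  set θ : Finset (Fin n → Vtx m) → ((Fin n → Amix m) → ZMod 2) :=
    fun T => ∑ z ∈ T, dcoef m n (emb m n z) with hθ
  have key : ∀ T ∈ S.powerset, ∀ x ∈ S,
      Phi m n (θ T) (emb m n x) = if x ∈ T then 1 else 0 := by
    intro T hT x hx
    rw [hθ]
    simp only
    rw [Phi_sum]
    have : (∑ z ∈ T, Phi m n (dcoef m n (emb m n z))) (emb m n x)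
        = ∑ z ∈ T, Phi m n (dcoef m n (emb m n z)) (emb m n x) := by
      simp [Finset.sum_apply]
    rw [this]
    have := sum_fprod_eval hS (Finset.mem_powerset.mp hT) x hx
    rw [← this]
    exact Finset.sum_congr rfl fun z _ => by rw [← fprod_eq_Phi]
  have hinj : Set.InjOn θ (S.powerset : Set (Finset (Fin n → Vtx m))) := by
    intro T hT T' hT' hEq
    have hT2 : T ∈ S.powerset := hT
    have hT2' : T' ∈ S.powerset := hT'
    ext x
    constructor
    · intro hxT
      have hxS : x ∈ S := Finset.mem_powerset.mp hT2 hxT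
      have h1 := key T hT2 x hxS
      have h2 := key T' hT2' x hxS
      rw [hEq] at h1
      rw [h1] at h2
      by_contra hxT'
      rw [if_pos hxT, if_neg hxT'] at h2
      exact one_ne_zero h2
    · intro hxT'
      have hxS : x ∈ S := Finset.mem_powerset.mp hT2' hxT'
      have h1 := key T hT2 x hxS
      have h2 := key T' hT2' x hxS
      rw [hEq] at h1
      rw [h1] at h2
      by_contra hxT
      rw [if_neg hxT, if_pos hxT'] at h2
      exact one_ne_zero h2.symm
  have hcard : S.powerset.card ≤ Fintype.card ((Fin n → Amix m) → ZMod 2) := by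
    rw [← Finset.card_univ]
    exact Finset.card_le_card_of_injOn θ (fun _ _ => Finset.mem_univ _) hinj
  rw [Finset.card_powerset] at hcard
  have hfn : Fintype.card ((Fin n → Amix m) → ZMod 2) = 2 ^ ((2 * m + 1) ^ n) := by
    rw [Fintype.card_fun, Fintype.card_fun, card_amix]
    simp
  rw [hfn] at hcard
  exact (Nat.pow_le_pow_iff_right (by norm_num)).mp hcard

/-! ### The lower bound -/

lemma indep_set_exists (m n : ℕ) (hm : 1 ≤ m) :
    ∃ S : Finset (Fin n → Vtx m),
      ((S : Set (Fin n → Vtx m)).Pairwise fun u v => ¬ ((sympGraph m).strongPow n).Adj u v) ∧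
      S.card = (2 * m + 1) ^ n := by
  classical
  set F : (Fin n → Fin (2 * m + 1)) → (Fin n → Vtx m) :=
    fun f i => ⟨lv m (f i), lv_ne_zero hm (f i)⟩ with hF
  have hFinj : Function.Injective F := by
    intro f g h
    funext i
    have := congrFun h i
    rw [hF] at this
    simp only [Subtype.mk.injEq] at this
    exact lv_injective this
  refine ⟨Finset.univ.image F, ?_, ?_⟩
  · intro x hx y hy hne hadj
    simp only [Finset.coe_image, Set.mem_image] at hx hy
    obtain ⟨f, -, rfl⟩ := hx
    obtain ⟨g, -, rfl⟩ := hy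
    have hfg : f ≠ g := fun h => hne (h ▸ rfl)
    obtain ⟨i, hi⟩ := Function.ne_iff.mp hfg
    obtain ⟨-, hall⟩ := hadj
    have hlv : lv m (f i) ≠ lv m (g i) := fun h => hi (lv_injective h)
    rcases hall i with heq | hadj_i
    · rw [hF] at heq
      simp only [Subtype.mk.injEq] at heq
      exact hlv heq
    · have hσ := hadj_i.2
      rw [hF] at hσ
      simp only at hσ
      rw [sympForm_lv (f i) (g i) hi] at hσ
      exact absurd hσ (by decide)
  · rw [Finset.card_image_of_injective _ hFinj, Finset.card_univ]
    simp

/-- For every `n ≥ 1`, the independence number of the `n`-th strong power of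
`Sp(2m, 𝔽₂)` equals `(2m+1)^n`. -/
theorem indepNum_strongPow_sympGraph (m n : ℕ) (hm : 1 ≤ m) (hn : 1 ≤ n) :
    ((sympGraph m).strongPow n).indepNum' = (2 * m + 1) ^ n := by
  unfold SimpleGraph.indepNum'
  obtain ⟨S, hS, hcard⟩ := indep_set_exists m n hm
  have hmem : (2 * m + 1) ^ n ∈
      {k | ∃ s : Finset (Fin n → Vtx m),
        ((s : Set (Fin n → Vtx m)).Pairwise fun u v => ¬ ((sympGraph m).strongPow n).Adj u v) ∧
        s.card = k} := ⟨S, hS, hcard⟩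
  have hub : ∀ k ∈ {k | ∃ s : Finset (Fin n → Vtx m),
        ((s : Set (Fin n → Vtx m)).Pairwise fun u v => ¬ ((sympGraph m).strongPow n).Adj u v) ∧
        s.card = k}, k ≤ (2 * m + 1) ^ n := by
    rintro k ⟨s, hs, rfl⟩
    exact indep_card_le m n s hs
  exact le_antisymm (csSup_le ⟨_, hmem⟩ hub) (le_csSup ⟨(2 * m + 1) ^ n, hub⟩ hmem)
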